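/- Suppose I : [0,T] → ℝ^N is differentiable with I(t) componentwise nonnegative, and I'(t) ≤ M I(t) componentwise where M = β₀A - γ₀·Id with A nonnegative symmetric and β₀ρ(A) < γ₀. Then ‖I(t)‖ ≤ ‖I(0)‖·e^{(β₀ρ(A) - γ₀)t} for all t ∈ [0,T], where ‖·‖ is the Euclidean norm. -/

import Mathlib

open scoped BigOperators

/-- The spectral radius of a real square matrix: the supremum of `|λ|` over
complex eigenvalues `λ` of the matrix. -/
noncomputable def specRad {N : ℕ} (M : Matrix (Fin N) (Fin N) ℝ) : ℝ :=
  sSup {r : ℝ | ∃ (μ : ℂ) (v : Fin N → ℂ), v ≠ 0 ∧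
    (M.map (Complex.ofReal)).mulVec v = μ • v ∧ r = ‖μ‖}

open Matrix

lemma specRad_bdd {N : ℕ} (A : Matrix (Fin N) (Fin N) ℝ) :
    BddAbove {r : ℝ | ∃ (μ : ℂ) (v : Fin N → ℂ), v ≠ 0 ∧
      (A.map (Complex.ofReal)).mulVec v = μ • v ∧ r = ‖μ‖} := by
  refine ⟨∑ i, ∑ j, |A i j|, ?_⟩
  rintro r ⟨μ, v, hv, hev, rfl⟩
  obtain ⟨i₁, hi₁⟩ := Function.ne_iff.mp hv
  have hne : (Finset.univ : Finset (Fin N)).Nonempty := ⟨i₁, Finset.mem_univ _⟩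
  obtain ⟨i, -, hmax⟩ := Finset.exists_max_image Finset.univ (fun i => ‖v i‖) hne
  have hvi : 0 < ‖v i‖ :=
    lt_of_lt_of_le (by simpa using hi₁) (hmax i₁ (Finset.mem_univ _))
  have h1 : ‖μ‖ * ‖v i‖ ≤ (∑ i, ∑ j, |A i j|) * ‖v i‖ := by
    have h2 : μ * v i = ∑ j, (A i j : ℂ) * v j := by
      have := congrFun hev i
      simp only [Matrix.mulVec, dotProduct, Matrix.map_apply, Pi.smul_apply,
        smul_eq_mul] at this
      exact this.symm
    calc ‖μ‖ * ‖v i‖ = ‖∑ j, (A i j : ℂ) * v j‖ := by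
          rw [← norm_mul, h2]
      _ ≤ ∑ j, ‖(A i j : ℂ) * v j‖ := norm_sum_le _ _
      _ ≤ ∑ j, |A i j| * ‖v i‖ := by
          refine Finset.sum_le_sum fun j _ => ?_
          rw [norm_mul, Complex.norm_real, Real.norm_eq_abs]
          exact mul_le_mul_of_nonneg_left (hmax j (Finset.mem_univ _)) (abs_nonneg _)
      _ = (∑ j, |A i j|) * ‖v i‖ := by rw [Finset.sum_mul]
      _ ≤ (∑ i, ∑ j, |A i j|) * ‖v i‖ := by
          refine mul_le_mul_of_nonneg_right ?_ hvi.le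
          exact Finset.single_le_sum (f := fun i => ∑ j, |A i j|)
            (fun i _ => Finset.sum_nonneg fun j _ => abs_nonneg _) (Finset.mem_univ i)
  exact le_of_mul_le_mul_right h1 hvi

lemma eig_le_specRad {N : ℕ} (A : Matrix (Fin N) (Fin N) ℝ) (μ : ℝ) (v : Fin N → ℝ)
    (hv : v ≠ 0) (hev : A.mulVec v = μ • v) : μ ≤ specRad A := by
  have hmem : |μ| ∈ {r : ℝ | ∃ (μ : ℂ) (v : Fin N → ℂ), v ≠ 0 ∧
      (A.map (Complex.ofReal)).mulVec v = μ • v ∧ r = ‖μ‖} := by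
    refine ⟨(μ : ℂ), fun i => (v i : ℂ), ?_, ?_, by simp⟩
    · intro h
      apply hv
      funext i
      have := congrFun h i
      simpa using this
    · funext i
      have := congrFun hev i
      simp only [Matrix.mulVec, dotProduct, Matrix.map_apply, Pi.smul_apply,
        smul_eq_mul] at this ⊢
      exact_mod_cast this
  exact le_trans (le_abs_self μ) (le_csSup (specRad_bdd A) hmem)

lemma quadform_le {N : ℕ} (A : Matrix (Fin N) (Fin N) ℝ) (hAsymm : A.IsSymm)
    (x : Fin N → ℝ) : x ⬝ᵥ A *ᵥ x ≤ specRad A * (x ⬝ᵥ x) := by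
  rcases eq_or_ne x 0 with rfl | hx
  · simp
  obtain ⟨i₁, hi₁⟩ := Function.ne_iff.mp hx
  have : Nonempty (Fin N) := ⟨i₁⟩
  have hH : A.IsHermitian := by
    rwa [Matrix.IsHermitian, Matrix.conjTranspose_eq_transpose_of_trivial]
  set b := hH.eigenvectorBasis with hb
  set lam := hH.eigenvalues with hlam
  obtain ⟨i₀, -, hmax⟩ := Finset.exists_max_image Finset.univ lam Finset.univ_nonempty
  have hspec : lam i₀ ≤ specRad A := by
    refine eig_le_specRad A (lam i₀) (b i₀) ?_ (hH.mulVec_eigenvectorBasis i₀)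
    intro h
    exact b.orthonormal.ne_zero i₀ (by ext i; exact congrFun h i)
  have hinner : ∀ y z : EuclideanSpace ℝ (Fin N), inner (𝕜 := ℝ) y z = (y : Fin N → ℝ) ⬝ᵥ z := by
    intro y z
    simp [PiLp.inner_apply, dotProduct, mul_comm]
  have hbY : ∀ j, inner (𝕜 := ℝ) (b j) (WithLp.toLp 2 (A *ᵥ x)) =
      lam j * inner (𝕜 := ℝ) (b j) (WithLp.toLp 2 x) := by
    intro j
    rw [hinner, hinner]
    calc (b j : Fin N → ℝ) ⬝ᵥ (A *ᵥ x) = ((b j : Fin N → ℝ) ᵥ* A) ⬝ᵥ x := by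
          rw [dotProduct_mulVec]
      _ = (A *ᵥ (b j : Fin N → ℝ)) ⬝ᵥ x := by
          rw [← Matrix.mulVec_transpose, hAsymm.eq]
      _ = (lam j • (b j : Fin N → ℝ)) ⬝ᵥ x := by
          have heig : A *ᵥ (b j : Fin N → ℝ) = lam j • (b j : Fin N → ℝ) :=
            hH.mulVec_eigenvectorBasis j
          rw [heig]
      _ = lam j * ((b j : Fin N → ℝ) ⬝ᵥ x) := by rw [smul_dotProduct]; rfl
  calc x ⬝ᵥ A *ᵥ x = inner (𝕜 := ℝ) (WithLp.toLp 2 x) (WithLp.toLp 2 (A *ᵥ x)) := (hinner (WithLp.toLp 2 x) (WithLp.toLp 2 (A *ᵥ x))).symm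
    _ = ∑ j, inner (𝕜 := ℝ) (WithLp.toLp 2 x) (b j) * inner (𝕜 := ℝ) (b j) (WithLp.toLp 2 (A *ᵥ x)) :=
        (b.sum_inner_mul_inner _ _).symm
    _ = ∑ j, lam j * (inner (𝕜 := ℝ) (WithLp.toLp 2 x) (b j) * inner (𝕜 := ℝ) (b j) (WithLp.toLp 2 x)) := by
        refine Finset.sum_congr rfl fun j _ => ?_
        rw [hbY j]; ring
    _ ≤ ∑ j, lam i₀ * (inner (𝕜 := ℝ) (WithLp.toLp 2 x) (b j) * inner (𝕜 := ℝ) (b j) (WithLp.toLp 2 x)) := by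
        refine Finset.sum_le_sum fun j _ => ?_
        have hsq : 0 ≤ inner (𝕜 := ℝ) (WithLp.toLp 2 x) (b j) * inner (𝕜 := ℝ) (b j) (WithLp.toLp 2 x) := by
          rw [real_inner_comm (WithLp.toLp 2 x) (b j)]; exact mul_self_nonneg _
        exact mul_le_mul_of_nonneg_right (hmax j (Finset.mem_univ _)) hsq
    _ = lam i₀ * inner (𝕜 := ℝ) (WithLp.toLp 2 x) (WithLp.toLp 2 x) := by rw [← Finset.mul_sum, b.sum_inner_mul_inner (WithLp.toLp 2 x) (WithLp.toLp 2 x)]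
    _ = lam i₀ * (x ⬝ᵥ x) := by rw [hinner]
    _ ≤ specRad A * (x ⬝ᵥ x) := by
        refine mul_le_mul_of_nonneg_right hspec ?_
        simp only [dotProduct]
        exact Finset.sum_nonneg fun i _ => mul_self_nonneg _

lemma row_eq {N : ℕ} (A : Matrix (Fin N) (Fin N) ℝ) (β₀ γ₀ : ℝ) (x : Fin N → ℝ) (i : Fin N) :
    ∑ j, (β₀ • A - γ₀ • (1 : Matrix (Fin N) (Fin N) ℝ)) i j * x j
      = β₀ * (A *ᵥ x) i - γ₀ * x i := by
  simp [Matrix.sub_apply, Matrix.smul_apply, Matrix.one_apply, sub_mul,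
    Finset.sum_sub_distrib, Matrix.mulVec, dotProduct, Finset.mul_sum,
    mul_assoc, ite_mul, Finset.sum_ite_eq]

theorem stmt_9 (N : ℕ) (T : ℝ) (hT : 0 < T)
    (A : Matrix (Fin N) (Fin N) ℝ) (hA : ∀ i j, 0 ≤ A i j) (hAsymm : A.IsSymm)
    (β₀ γ₀ : ℝ) (hβ : 0 < β₀) (hγ : 0 < γ₀) (hsub : β₀ * specRad A < γ₀)
    (I : ℝ → Fin N → ℝ)
    (hdiff : ∀ i, Differentiable ℝ (fun t => I t i))
    (hnonneg : ∀ t ∈ Set.Icc 0 T, ∀ i, 0 ≤ I t i)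
    (hineq : ∀ t ∈ Set.Icc 0 T, ∀ i,
      deriv (fun s => I s i) t ≤
        ∑ j, (β₀ • A - γ₀ • (1 : Matrix (Fin N) (Fin N) ℝ)) i j * I t j) :
    ∀ t ∈ Set.Icc 0 T,
      Real.sqrt (∑ i, (I t i) ^ 2) ≤
        Real.sqrt (∑ i, (I 0 i) ^ 2) * Real.exp ((β₀ * specRad A - γ₀) * t) := by
  intro t ht
  set c : ℝ := β₀ * specRad A - γ₀ with hc
  set f : ℝ → ℝ := fun s => ∑ i, (I s i) ^ 2 with hf
  set D : ℝ → ℝ := fun s => ∑ i, 2 * I s i * deriv (fun u => I u i) s with hD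
  have hf' : ∀ s, HasDerivAt f (D s) s := by
    intro s
    have h : ∀ i ∈ Finset.univ, HasDerivAt (fun u => (I u i) ^ 2)
        (2 * I s i * deriv (fun u => I u i) s) s := by
      intro i _
      have h := (hdiff i s).hasDerivAt
      have := h.fun_pow 2
      simpa [pow_one] using this
    simpa using HasDerivAt.fun_sum h
  have hfdiff : Differentiable ℝ f := fun s => (hf' s).differentiableAt
  have hfnonneg : ∀ s, 0 ≤ f s := fun s => Finset.sum_nonneg fun i _ => sq_nonneg _
  have hdot : ∀ s, I s ⬝ᵥ I s = f s := by
    intro s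
    simp [dotProduct, hf, pow_two]
  -- key derivative inequality on [0,T]
  have hkey : ∀ s ∈ Set.Icc (0:ℝ) T, D s ≤ 2 * c * f s := by
    intro s hs
    have step1 : D s ≤ ∑ i, 2 * I s i * (β₀ * (A *ᵥ I s) i - γ₀ * I s i) := by
      refine Finset.sum_le_sum fun i _ => ?_
      have h1 := hineq s hs i
      rw [row_eq] at h1
      exact mul_le_mul_of_nonneg_left h1
        (mul_nonneg (by norm_num) (hnonneg s hs i))
    have step2 : ∑ i, 2 * I s i * (β₀ * (A *ᵥ I s) i - γ₀ * I s i)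
        = 2 * (β₀ * (I s ⬝ᵥ (A *ᵥ I s)) - γ₀ * (I s ⬝ᵥ I s)) := by
      simp only [dotProduct, Finset.mul_sum, mul_sub, Finset.sum_sub_distrib]
      congr 1 <;> exact Finset.sum_congr rfl fun i _ => by ring
    have step3 : I s ⬝ᵥ (A *ᵥ I s) ≤ specRad A * (I s ⬝ᵥ I s) := quadform_le A hAsymm (I s)
    have hq : 0 ≤ I s ⬝ᵥ I s := by rw [hdot]; exact hfnonneg s
    calc D s ≤ ∑ i, 2 * I s i * (β₀ * (A *ᵥ I s) i - γ₀ * I s i) := step1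
      _ = 2 * (β₀ * (I s ⬝ᵥ (A *ᵥ I s)) - γ₀ * (I s ⬝ᵥ I s)) := step2
      _ ≤ 2 * (β₀ * (specRad A * (I s ⬝ᵥ I s)) - γ₀ * (I s ⬝ᵥ I s)) := by
          have := mul_le_mul_of_nonneg_left step3 hβ.le
          linarith
      _ = 2 * c * (I s ⬝ᵥ I s) := by rw [hc]; ring
      _ = 2 * c * f s := by rw [hdot]
  -- Gronwall via auxiliary function
  set g : ℝ → ℝ := fun s => f s * Real.exp (-(2*c) * s) with hg
  have hg' : ∀ s, HasDerivAt g (D s * Real.exp (-(2*c)*s)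
      + f s * (Real.exp (-(2*c)*s) * -(2*c))) s := by
    intro s
    have h1 : HasDerivAt (fun u : ℝ => -(2*c)*u) (-(2*c)) s := by
      simpa using (hasDerivAt_id s).const_mul (-(2*c))
    have h2 := (Real.hasDerivAt_exp (-(2*c)*s)).comp s h1
    exact (hf' s).mul h2
  have hanti : AntitoneOn g (Set.Icc 0 T) := by
    apply antitoneOn_of_deriv_nonpos (convex_Icc 0 T)
    · exact (Differentiable.continuous (fun s => (hg' s).differentiableAt)).continuousOn
    · intro s _
      exact ((hg' s).differentiableAt).differentiableWithinAt
    · intro s hs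
      rw [interior_Icc] at hs
      have hsIcc : s ∈ Set.Icc (0:ℝ) T := ⟨hs.1.le, hs.2.le⟩
      rw [(hg' s).deriv]
      have hE := Real.exp_pos (-(2*c)*s)
      nlinarith [hkey s hsIcc, hfnonneg s]
  have h0 : (0:ℝ) ∈ Set.Icc (0:ℝ) T := ⟨le_refl _, hT.le⟩
  have hgle : g t ≤ g 0 := hanti h0 ht ht.1
  have hft : f t ≤ f 0 * Real.exp (2*c*t) := by
    have hE := Real.exp_pos (-(2*c)*t)
    have h2 : f t * Real.exp (-(2*c)*t) ≤ f 0 * Real.exp (-(2*c)*0) := hgle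
    rw [mul_zero, Real.exp_zero, mul_one] at h2
    have h3 := mul_le_mul_of_nonneg_right h2 (Real.exp_pos (2*c*t)).le
    rw [mul_assoc, ← Real.exp_add] at h3
    simpa using h3
  calc Real.sqrt (∑ i, (I t i) ^ 2) = Real.sqrt (f t) := rfl
    _ ≤ Real.sqrt (f 0 * Real.exp (2*c*t)) := Real.sqrt_le_sqrt hft
    _ = Real.sqrt (f 0) * Real.sqrt (Real.exp (2*c*t)) := Real.sqrt_mul (hfnonneg 0) _
    _ = Real.sqrt (f 0) * Real.exp (c*t) := by
        congr 1
        have : Real.exp (2*c*t) = Real.exp (c*t) ^ 2 := by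
          rw [← Real.exp_nat_mul]
          norm_num
          ring_nf
        rw [this, Real.sqrt_sq (Real.exp_pos _).le]
    _ = Real.sqrt (∑ i, (I 0 i) ^ 2) * Real.exp ((β₀ * specRad A - γ₀) * t) := by rw [hc]
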